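/- Let φ = ⋁_{k ∈ K} (l_{k1} ∧ l_{k2} ∧ l_{k3}) be a 3-DNF over variables {x₁, …, xₙ}, with K finite and each l_{kj} a literal over {x₁, …, xₙ}. Over V := {x₁, …, xₙ} ∪ {x'₁, …, x'ₙ} ∪ {q}, for each k ∈ K let c'ₖ be the positive clause in which a literal xᵢ of the k-th term contributes x'ᵢ and a literal ¬xᵢ contributes xᵢ. Define Γ := { c'ₖ ∨ q : k ∈ K } ∪ { σ ↦ σ xᵢ ∨ σ x'ᵢ : 1 ≤ i ≤ n } and ψ := σ ↦ σ q ∨ ⋁_{i=1}^{n} (σ xᵢ ∧ σ x'ᵢ). Then φ is a tautology (φ evaluates to true under every assignment of x₁, …, xₙ) if and only if (Γ, ∅, ψ) has an explanation, equivalently, if and only if Γ is satisfiable and Γ ⊨ ψ. -/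

import Mathlib

/-- `σ` satisfies the knowledge base `Γ` (a set of formulas, each a Boolean function
on assignments). -/
def SatKB {V : Type*} (Γ : Set ((V → Bool) → Bool)) (σ : V → Bool) : Prop :=
  ∀ γ ∈ Γ, γ σ = true

/-- `σ` satisfies the set of literals given by positive part `P` and negative part `N`. -/
def SatLits {V : Type*} (σ : V → Bool) (P N : Set V) : Prop :=
  (∀ x ∈ P, σ x = true) ∧ (∀ x ∈ N, σ x = false)

/-- `(P, N)` is an explanation for the abduction instance `(Γ, A, φ)`. -/
def IsExplanation {V : Type*} (Γ : Set ((V → Bool) → Bool)) (A : Set V)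
    (φ : (V → Bool) → Bool) (P N : Set V) : Prop :=
  P ⊆ A ∧ N ⊆ A ∧ Disjoint P N ∧
    (∃ σ, SatKB Γ σ ∧ SatLits σ P N) ∧
    (∀ σ, SatKB Γ σ → SatLits σ P N → φ σ = true)

/-- Reduction from 3-DNF tautology to positive abduction with a monotone knowledge base
and a formula manifestation. Variables: `Sum.inl i` is `xᵢ`, `Sum.inr (Sum.inl i)` is
`x'ᵢ`, `Sum.inr (Sum.inr ())` is `q`; the 3-DNF `φ` is given by its terms `T k`, each a
triple of literals (pairs of a variable and a polarity). -/
theorem stmt_13 (n : ℕ) (K : Type*) [Fintype K] (T : K → Fin 3 → Fin n × Bool) :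
    let L : Fin n × Bool → Fin n ⊕ Fin n ⊕ Unit := fun p =>
      if p.2 then Sum.inr (Sum.inl p.1) else Sum.inl p.1
    let q : Fin n ⊕ Fin n ⊕ Unit := Sum.inr (Sum.inr ())
    let Γ : Set ((Fin n ⊕ Fin n ⊕ Unit → Bool) → Bool) :=
      Set.range (fun k : K => fun σ : Fin n ⊕ Fin n ⊕ Unit → Bool =>
          σ (L (T k 0)) || σ (L (T k 1)) || σ (L (T k 2)) || σ q) ∪
      Set.range (fun i : Fin n => fun σ : Fin n ⊕ Fin n ⊕ Unit → Bool =>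
          σ (Sum.inl i) || σ (Sum.inr (Sum.inl i)))
    let ψ : (Fin n ⊕ Fin n ⊕ Unit → Bool) → Bool := fun σ =>
      σ q || decide (∃ i : Fin n, σ (Sum.inl i) = true ∧ σ (Sum.inr (Sum.inl i)) = true)
    ((∀ a : Fin n → Bool, ∃ k : K, ∀ j : Fin 3, a (T k j).1 = (T k j).2) ↔
        ∃ P N : Set (Fin n ⊕ Fin n ⊕ Unit), IsExplanation Γ ∅ ψ P N) ∧
    ((∀ a : Fin n → Bool, ∃ k : K, ∀ j : Fin 3, a (T k j).1 = (T k j).2) ↔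
        ((∃ σ, SatKB Γ σ) ∧ ∀ σ, SatKB Γ σ → ψ σ = true)) := by
  intro L q Γ ψ
  have hsat : ∃ σ, SatKB Γ σ := by
    refine ⟨fun _ => true, ?_⟩
    rintro γ (⟨k, rfl⟩ | ⟨i, rfl⟩) <;> simp
  have key : (∀ a : Fin n → Bool, ∃ k : K, ∀ j : Fin 3, a (T k j).1 = (T k j).2) ↔
      (∀ σ, SatKB Γ σ → ψ σ = true) := by
    constructor
    · intro h σ hσ
      by_contra hψ
      have hψ' : ψ σ = false := Bool.eq_false_iff.mpr hψ
      simp only [ψ, Bool.or_eq_false_iff, decide_eq_false_iff_not, not_exists] at hψ'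
      obtain ⟨hq, hno⟩ := hψ'
      obtain ⟨k, hk⟩ := h (fun i => σ (Sum.inl i))
      have hc := hσ _ (Or.inl ⟨k, rfl⟩)
      simp only [hq, Bool.or_false, Bool.or_eq_true] at hc
      have hall : ∀ j : Fin 3, σ (L (T k j)) = false := by
        intro j
        have hkj := hk j
        try simp only at hkj
        rcases hT : T k j with ⟨i, b⟩
        rw [hT] at hkj
        cases b with
        | false =>
          simpa [L, hT] using hkj
        | true =>
          simp only [L, hT, if_pos]
          by_contra hx
          exact hno i ⟨hkj, Bool.not_eq_false _ ▸ eq_true_of_ne_false hx⟩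
      rcases hc with (h0 | h1) | h2
      · rw [hall 0] at h0; exact Bool.false_ne_true h0
      · rw [hall 1] at h1; exact Bool.false_ne_true h1
      · rw [hall 2] at h2; exact Bool.false_ne_true h2
    · intro h a
      set σ : Fin n ⊕ Fin n ⊕ Unit → Bool :=
        Sum.elim a (Sum.elim (fun i => !(a i)) (fun _ => false)) with hσdef
      by_cases hkb : SatKB Γ σ
      · exfalso
        have hψ := h σ hkb
        simp only [ψ, q, Bool.or_eq_true, decide_eq_true_eq] at hψ
        rcases hψ with h1 | ⟨i, h1, h2⟩
        · simp [σ] at h1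
        · simp [σ] at h1 h2
          rw [h1] at h2; exact Bool.false_ne_true h2.symm
      · rw [SatKB] at hkb
        push_neg at hkb
        obtain ⟨γ, hγΓ, hγ⟩ := hkb
        rcases hγΓ with ⟨k, rfl⟩ | ⟨i, rfl⟩
        · have hγ' := Bool.eq_false_iff.mpr hγ
          simp only [Bool.or_eq_false_iff] at hγ'
          obtain ⟨⟨⟨h0, h1⟩, h2⟩, _⟩ := hγ'
          refine ⟨k, fun j => ?_⟩
          have hLj : σ (L (T k j)) = false := by
            fin_cases j
            · exact h0
            · exact h1
            · exact h2
          rcases hT : T k j with ⟨i, b⟩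
          rw [hT] at hLj
          cases b with
          | false => simpa [L, σ] using hLj
          | true =>
            simp only [L, if_pos, σ, Sum.elim_inr, Sum.elim_inl, Bool.not_eq_false'] at hLj
            simpa using hLj
        · exact absurd (by simp [σ]) hγ
  refine ⟨?_, ?_⟩
  · rw [key]
    constructor
    · intro h
      obtain ⟨σ₀, hσ₀⟩ := hsat
      exact ⟨∅, ∅, by simp, by simp, by simp,
        ⟨σ₀, hσ₀, by simp [SatLits]⟩, fun σ hσ _ => h σ hσ⟩
    · rintro ⟨P, N, hP, hN, _, _, hent⟩ σ hσ
      have hP0 : P = ∅ := Set.subset_empty_iff.mp hP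
      have hN0 : N = ∅ := Set.subset_empty_iff.mp hN
      subst hP0; subst hN0
      exact hent σ hσ (by simp [SatLits])
  · rw [key]
    exact ⟨fun h => ⟨hsat, h⟩, fun h => h.2⟩
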